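/- In the six-dimensional Lie algebra g^ess with basis P^t, D, K, G^x, P^x, I and brackets [D,P^t]=-2P^t, [D,K]=2K, [P^t,K]=D, [P^t,G^x]=P^x, [D,G^x]=G^x, [D,P^x]=-P^x, [K,P^x]=-G^x, [G^x,P^x]=(1/2)I (other brackets zero), the only proper nonzero ideals are r = span(G^x, P^x, I) and the center z = span(I). -/

import Mathlib

/-- In the essential Lie invariance algebra of the heat equation, with basis
`(P^t, D, K, G^x, P^x, I) = (b 0, ..., b 5)` and the stated commutation relations,
the only proper nonzero ideals are the radical `r = span(G^x, P^x, I)` and the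
center `z = span(I)`. -/
theorem heat_algebra_ideals
    (L : Type*) [LieRing L] [LieAlgebra ℝ L] (b : Module.Basis (Fin 6) ℝ L)
    (h10 : ⁅b 1, b 0⁆ = (-2 : ℝ) • b 0)
    (h12 : ⁅b 1, b 2⁆ = (2 : ℝ) • b 2)
    (h02 : ⁅b 0, b 2⁆ = b 1)
    (h03 : ⁅b 0, b 3⁆ = b 4)
    (h13 : ⁅b 1, b 3⁆ = b 3)
    (h14 : ⁅b 1, b 4⁆ = -b 4)
    (h24 : ⁅b 2, b 4⁆ = -b 3)
    (h34 : ⁅b 3, b 4⁆ = (1 / 2 : ℝ) • b 5)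
    (h04 : ⁅b 0, b 4⁆ = 0) (h23 : ⁅b 2, b 3⁆ = 0)
    (h05 : ⁅b 0, b 5⁆ = 0) (h15 : ⁅b 1, b 5⁆ = 0) (h25 : ⁅b 2, b 5⁆ = 0)
    (h35 : ⁅b 3, b 5⁆ = 0) (h45 : ⁅b 4, b 5⁆ = 0) :
    ∀ I : LieIdeal ℝ L, I ≠ ⊥ → I ≠ ⊤ →
      LieSubmodule.toSubmodule I = Submodule.span ℝ {b 3, b 4, b 5} ∨
      LieSubmodule.toSubmodule I = Submodule.span ℝ {b 5} := by
  -- reversed bracket table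
  have h01 : ⁅b 0, b 1⁆ = (2 : ℝ) • b 0 := by rw [← lie_skew, h10]; module
  have h21 : ⁅b 2, b 1⁆ = (-2 : ℝ) • b 2 := by rw [← lie_skew, h12]; module
  have h20 : ⁅b 2, b 0⁆ = -b 1 := by rw [← lie_skew, h02]
  have h30 : ⁅b 3, b 0⁆ = -b 4 := by rw [← lie_skew, h03]
  have h31 : ⁅b 3, b 1⁆ = -b 3 := by rw [← lie_skew, h13]
  have h41 : ⁅b 4, b 1⁆ = b 4 := by rw [← lie_skew, h14, neg_neg]
  have h42 : ⁅b 4, b 2⁆ = b 3 := by rw [← lie_skew, h24, neg_neg]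
  have h43 : ⁅b 4, b 3⁆ = (-(1 / 2) : ℝ) • b 5 := by rw [← lie_skew, h34]; module
  have h40 : ⁅b 4, b 0⁆ = 0 := by rw [← lie_skew, h04, neg_zero]
  have h32 : ⁅b 3, b 2⁆ = 0 := by rw [← lie_skew, h23, neg_zero]
  have h00 : ⁅b 0, b 0⁆ = 0 := lie_self _
  have h11 : ⁅b 1, b 1⁆ = 0 := lie_self _
  have h22 : ⁅b 2, b 2⁆ = 0 := lie_self _
  have h33 : ⁅b 3, b 3⁆ = 0 := lie_self _
  have h44 : ⁅b 4, b 4⁆ = 0 := lie_self _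
  intro I hbot htop
  -- a nonzero scalar multiple in the ideal puts the vector in the ideal
  have smul_mem' : ∀ (c : ℝ) (y : L), c ≠ 0 → c • y ∈ I → y ∈ I := by
    intro c y hc h
    have := I.smul_mem c⁻¹ h
    rwa [smul_smul, inv_mul_cancel₀ hc, one_smul] at this
  have neg_mem' : ∀ y : L, -y ∈ I → y ∈ I := by
    intro y h
    have := smul_mem' (-1) y (by norm_num)
    apply this; rwa [neg_one_smul]
  -- Step A: every element of I has vanishing coordinates 0, 1, 2
  have keyA : ∀ x ∈ I, b.repr x 0 = 0 ∧ b.repr x 1 = 0 ∧ b.repr x 2 = 0 := by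
    intro x hxI
    by_contra hcon
    set a : Fin 6 → ℝ := fun i => b.repr x i with ha
    have hx : x = a 0 • b 0 + a 1 • b 1 + a 2 • b 2 + a 3 • b 3 + a 4 • b 4 + a 5 • b 5 := by
      have := b.sum_repr x
      rw [Fin.sum_univ_six] at this
      exact this.symm
    -- bracket computations
    have k1 : ⁅b 0, x⁆ = (2 * a 1) • b 0 + a 2 • b 1 + a 3 • b 4 := by
      rw [hx]
      simp only [lie_add, lie_smul, lie_neg, neg_smul, smul_neg, neg_neg, h00, h01, h02, h03, h04, h05, smul_zero]
      module
    have k2 : ⁅b 0, ⁅b 0, x⁆⁆ = (2 * a 2) • b 0 := by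
      rw [k1]
      simp only [lie_add, lie_smul, lie_neg, neg_smul, smul_neg, neg_neg, h00, h01, h04, smul_zero]
      module
    have k1' : ⁅b 2, x⁆ = (-(a 0)) • b 1 + (-(2 * a 1)) • b 2 + (-(a 4)) • b 3 := by
      rw [hx]
      simp only [lie_add, lie_smul, lie_neg, neg_smul, smul_neg, neg_neg, h20, h21, h22, h23, h24, h25, smul_zero]
      module
    have k2' : ⁅b 2, ⁅b 2, x⁆⁆ = (2 * a 0) • b 2 := by
      rw [k1']
      simp only [lie_add, lie_smul, lie_neg, neg_smul, smul_neg, neg_neg, h21, h22, h23, smul_zero]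
      module
    have k3 : ⁅b 2, ⁅b 2, ⁅b 0, x⁆⁆⁆ = (4 * a 1) • b 2 := by
      rw [k1]
      simp only [lie_add, lie_smul, lie_neg, neg_smul, smul_neg, neg_neg, h20, h21, h22, h23, h24, smul_zero]
      module
    -- one of b 0, b 2 belongs to I
    have hb02 : b 0 ∈ I ∨ b 2 ∈ I := by
      push_neg at hcon
      by_cases ha2 : a 2 = 0
      · by_cases ha0 : a 0 = 0
        · have ha1 : a 1 ≠ 0 := fun h1 => (hcon ha0 h1) ha2
          right
          apply smul_mem' (4 * a 1) _ (by simpa using ha1)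
          rw [← k3]
          exact LieSubmodule.lie_mem I (LieSubmodule.lie_mem I (LieSubmodule.lie_mem I hxI))
        · right
          apply smul_mem' (2 * a 0) _ (by simpa using ha0)
          rw [← k2']
          exact LieSubmodule.lie_mem I (LieSubmodule.lie_mem I hxI)
      · left
        apply smul_mem' (2 * a 2) _ (by simpa using ha2)
        rw [← k2]
        exact LieSubmodule.lie_mem I (LieSubmodule.lie_mem I hxI)
    -- hence b 0, b 1, b 2 all belong to I
    have hb0 : b 0 ∈ I ∧ b 2 ∈ I := by
      rcases hb02 with h | h
      · refine ⟨h, ?_⟩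
        have hb1 : b 1 ∈ I := by
          apply neg_mem'
          rw [← h20]; exact LieSubmodule.lie_mem I h
        apply smul_mem' (-2) _ (by norm_num)
        rw [← h21]; exact LieSubmodule.lie_mem I hb1
      · refine ⟨?_, h⟩
        have hb1 : b 1 ∈ I := by
          rw [← h02]; exact LieSubmodule.lie_mem I h
        apply smul_mem' (2 : ℝ) _ (by norm_num)
        rw [← h01]; exact LieSubmodule.lie_mem I hb1
    obtain ⟨hb0', hb2'⟩ := hb0
    have hb1' : b 1 ∈ I := by rw [← h02]; exact LieSubmodule.lie_mem I hb2'
    have hb4' : b 4 ∈ I := by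
      apply neg_mem'; rw [← h30]; exact LieSubmodule.lie_mem I hb0'
    have hb3' : b 3 ∈ I := by
      apply neg_mem'; rw [← h24]; exact LieSubmodule.lie_mem I hb4'
    have hb5' : b 5 ∈ I := by
      apply smul_mem' (1 / 2 : ℝ) _ (by norm_num)
      rw [← h34]; exact LieSubmodule.lie_mem I hb4'
    -- then I = ⊤, contradiction
    apply htop
    ext y
    simp only [LieSubmodule.mem_top, iff_true]
    have hy : y = b.repr y 0 • b 0 + b.repr y 1 • b 1 + b.repr y 2 • b 2 + b.repr y 3 • b 3
        + b.repr y 4 • b 4 + b.repr y 5 • b 5 := by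
      have := b.sum_repr y
      rw [Fin.sum_univ_six] at this
      exact this.symm
    rw [hy]
    exact I.add_mem (I.add_mem (I.add_mem (I.add_mem (I.add_mem
      (I.smul_mem _ hb0') (I.smul_mem _ hb1')) (I.smul_mem _ hb2'))
      (I.smul_mem _ hb3')) (I.smul_mem _ hb4')) (I.smul_mem _ hb5')
  -- Step B
  by_cases hex : ∃ x ∈ I, b.repr x 3 ≠ 0 ∨ b.repr x 4 ≠ 0
  · left
    obtain ⟨x, hxI, hx34⟩ := hex
    obtain ⟨e0, e1, e2⟩ := keyA x hxI
    set a : Fin 6 → ℝ := fun i => b.repr x i with ha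
    have hx : x = a 3 • b 3 + a 4 • b 4 + a 5 • b 5 := by
      have h := b.sum_repr x
      rw [Fin.sum_univ_six, e0, e1, e2] at h
      exact h.symm.trans (by module)
    -- get b 3 ∈ I and b 4 ∈ I
    have hb34 : b 3 ∈ I ∧ b 4 ∈ I := by
      rcases hx34 with h3 | h4
      · have k : ⁅b 0, x⁆ = a 3 • b 4 := by
          rw [hx]
          simp only [lie_add, lie_smul, lie_neg, neg_smul, smul_neg, neg_neg, h03, h04, h05, smul_zero]
          module
        have hb4 : b 4 ∈ I := by
          apply smul_mem' (a 3) _ h3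
          rw [← k]; exact LieSubmodule.lie_mem I hxI
        have hb3 : b 3 ∈ I := by
          apply neg_mem'; rw [← h24]; exact LieSubmodule.lie_mem I hb4
        exact ⟨hb3, hb4⟩
      · have k : ⁅b 2, x⁆ = (-(a 4)) • b 3 := by
          rw [hx]
          simp only [lie_add, lie_smul, lie_neg, neg_smul, smul_neg, neg_neg, h23, h24, h25, smul_zero]
          module
        have hb3 : b 3 ∈ I := by
          apply smul_mem' (-(a 4)) _ (by simpa using h4)
          rw [← k]; exact LieSubmodule.lie_mem I hxI
        have hb4 : b 4 ∈ I := by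
          rw [← h03]; exact LieSubmodule.lie_mem I hb3
        exact ⟨hb3, hb4⟩
    obtain ⟨hb3', hb4'⟩ := hb34
    have hb5' : b 5 ∈ I := by
      apply smul_mem' (1 / 2 : ℝ) _ (by norm_num)
      rw [← h34]; exact LieSubmodule.lie_mem I hb4'
    apply le_antisymm
    · intro y hy
      have hyI : y ∈ I := hy
      obtain ⟨f0, f1, f2⟩ := keyA y hyI
      have hyrep : y = b.repr y 3 • b 3 + b.repr y 4 • b 4 + b.repr y 5 • b 5 := by
        have h := b.sum_repr y
        rw [Fin.sum_univ_six, f0, f1, f2] at h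
        exact h.symm.trans (by module)
      rw [hyrep]
      have m3 : b 3 ∈ ({b 3, b 4, b 5} : Set L) := by simp
      have m4 : b 4 ∈ ({b 3, b 4, b 5} : Set L) := by simp
      have m5 : b 5 ∈ ({b 3, b 4, b 5} : Set L) := by simp
      exact Submodule.add_mem _ (Submodule.add_mem _
        (Submodule.smul_mem _ _ (Submodule.subset_span m3))
        (Submodule.smul_mem _ _ (Submodule.subset_span m4)))
        (Submodule.smul_mem _ _ (Submodule.subset_span m5))
    · rw [Submodule.span_le]
      intro y hy
      simp only [Set.mem_insert_iff, Set.mem_singleton_iff] at hy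
      rcases hy with rfl | rfl | rfl
      · exact hb3'
      · exact hb4'
      · exact hb5'
  · right
    push_neg at hex
    -- every element of I is a multiple of b 5
    have hrep : ∀ y ∈ I, y = b.repr y 5 • b 5 := by
      intro y hy
      obtain ⟨f0, f1, f2⟩ := keyA y hy
      obtain ⟨f3, f4⟩ := hex y hy
      have h := b.sum_repr y
      rw [Fin.sum_univ_six, f0, f1, f2, f3, f4] at h
      exact h.symm.trans (by module)
    -- some nonzero element of I
    obtain ⟨z, hzI, hz⟩ : ∃ z, z ∈ I ∧ z ≠ 0 := by
      by_contra h
      push_neg at h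
      exact hbot (LieSubmodule.eq_bot_iff I |>.2 fun m hm => h m hm)
    have hz5 : b.repr z 5 ≠ 0 := by
      intro h0
      apply hz
      rw [hrep z hzI, h0, zero_smul]
    have hb5' : b 5 ∈ I := by
      apply smul_mem' (b.repr z 5) _ hz5
      rw [← hrep z hzI]; exact hzI
    apply le_antisymm
    · intro y hy
      have hyI : y ∈ I := hy
      rw [hrep y hyI]
      exact Submodule.smul_mem _ _ (Submodule.subset_span rfl)
    · rw [Submodule.span_le]
      intro y hy
      simp only [Set.mem_singleton_iff] at hy
      subst hy
      exact hb5'
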